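/- The map T is sign-preserving with the appropriate conventions: if T(π, σ) = (π′, σ′) ∈ B(n) then sign(π)·sign(σ) = sign(π′)·sign(σ′), and if T(π, σ) = (π′, σ′) ∈ C(n) then sign(π)·sign(σ) = −sign(π′)·sign(σ′), where the sign of a bijection between two r-element subsets of ℤ, each listed in increasing order, is the sign of the induced permutation of {1,…,r}. -/

import Mathlib

/- We work with `n + 2` people of each sex (so the number of people is at least 2),
men and women both indexed by `Fin (n+2)`; man `0` is "Mr. 1" and man `Fin.last (n+1)`
is "Mr. n", and similarly for women.

A pair `(π, σ)` of total permutations of `Fin (n+2)` encodes an element of one of the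
sets `A(n)`, `B(n)`, `C(n)` of pairs (marriage matching, affair matching) of
Zeilberger's proof, via dummy values at the unused points:
* `A(n)`: `π` is the marriage matching of all men to all women, and the affair
  matching `{2,…,n-1} → {2',…,(n-1)'}` is encoded by a permutation `σ` fixing the
  endpoints `0` and `last`.
* `B(n)`: the marriage matching `{1,…,n-1} → {1',…,(n-1)'}` is encoded by `π` with the
  dummy value `π last = last`, and the affair matching `{2,…,n} → {2',…,n'}` by `σ`
  with dummy value `σ 0 = 0`.
* `C(n)`: the marriage matching `{1,…,n-1} → {2',…,n'}` is encoded by `π` with dummy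
  value `π last = 0`, and the affair matching `{2,…,n} → {1',…,(n-1)'}` by `σ` with
  dummy value `σ 0 = last`. -/

/-- A pair (marriages, affairs) of permutations. -/
abbrev PairPerm (n : ℕ) := Equiv.Perm (Fin (n + 2)) × Equiv.Perm (Fin (n + 2))

/-- The last index (Mr./Ms. `n`). -/
def lastF (n : ℕ) : Fin (n + 2) := Fin.last (n + 1)

/-- The middle indices `{2,…,n-1}` (people having affairs in `A(n)`). -/
def middleF (n : ℕ) : Finset (Fin (n + 2)) := (Finset.univ.erase 0).erase (lastF n)

/-- Membership in `A(n)`: the affair permutation fixes the two endpoints. -/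
def InA {n : ℕ} (p : PairPerm n) : Prop := p.2 0 = 0 ∧ p.2 (lastF n) = lastF n

/-- Membership in `B(n)`: dummy marriage `n ↦ n'`, dummy affair `1 ↦ 1'`. -/
def InB {n : ℕ} (p : PairPerm n) : Prop := p.1 (lastF n) = lastF n ∧ p.2 0 = 0

/-- Membership in `C(n)`: dummy marriage `n ↦ 1'`, dummy affair `1 ↦ n'`. -/
def InC {n : ℕ} (p : PairPerm n) : Prop := p.1 (lastF n) = 0 ∧ p.2 0 = lastF n

/-- The alternating chain of men: `m 0 = n`, and `m (k+1)` is the lover of the wife of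
`m k` (wife: apply `π`; lover: apply `σ⁻¹`). -/
def chainM {n : ℕ} (p : PairPerm n) : ℕ → Fin (n + 2)
  | 0 => lastF n
  | k + 1 => p.2.symm (p.1 (chainM p k))

/-- The alternating chain of women: `w k` is the wife of `m k`. -/
def chainW {n : ℕ} (p : PairPerm n) (k : ℕ) : Fin (n + 2) := p.1 (chainM p k)

/-- `TStep p q` says that `q` is obtained from `p` by Zeilberger's map `T`: along the
alternating chain `m 0 = n, w 0, m 1, w 1, …` of `p`, which terminates at the first
woman `w (r-1) ∈ {1', n'}`, marriages `(m k, w k)` become affairs and affairs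
`(m (k+1), w k)` become marriages; everything off the chain is unchanged, and the
dummy values are set according to whether the chain ended at `1'` or at `n'`. -/
def TStep {n : ℕ} (p q : PairPerm n) : Prop :=
  ∃ r : ℕ, 1 ≤ r ∧
    (∀ k, k + 1 < r → chainW p k ≠ 0 ∧ chainW p k ≠ lastF n) ∧
    (chainW p (r - 1) = 0 ∨ chainW p (r - 1) = lastF n) ∧
    (∀ i, (∀ k, k < r → i ≠ chainM p k) → q.1 i = p.1 i) ∧
    (∀ i, i ≠ 0 → (∀ k, k < r → i ≠ chainM p k) → q.2 i = p.2 i) ∧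
    (∀ k, k + 1 < r → q.1 (chainM p (k + 1)) = chainW p k) ∧
    q.1 (lastF n) = chainW p (r - 1) ∧
    (∀ k, k < r → q.2 (chainM p k) = chainW p k) ∧
    q.2 0 = (if chainW p (r - 1) = 0 then lastF n else 0)

lemma sign_formPerm_nodup {α : Type*} [DecidableEq α] [Fintype α] (l : List α)
    (hl : l.Nodup) (hne : l ≠ []) :
    Equiv.Perm.sign l.formPerm = (-1) ^ (l.length - 1) := by
  match l with
  | [x] => simp [List.formPerm_singleton]
  | x :: y :: l =>
    have h2 : 2 ≤ (x :: y :: l).length := by simp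
    have hc := List.isCycle_formPerm hl h2
    rw [hc.sign, List.support_formPerm_of_nodup _ hl
      (by intro z hz; rw [hz] at h2; simp at h2),
      List.card_toFinset, List.Nodup.dedup hl]
    simp [pow_succ]

/-- `T` is sign-preserving with the appropriate conventions: if `T p = q ∈ B(n)` then
`sign π · sign σ = sign π' · sign σ'`, and if `q ∈ C(n)` then
`sign π · sign σ = −(sign π' · sign σ')`.  (With our encoding by total permutations,
the sign of a bijection between two subsets of equal size, each listed in increasing
order, agrees with the sign of the encoding total permutation in the `A(n)` and `B(n)`
cases; in the `C(n)` case both encoding permutations acquire the same extra factor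
`(-1)^(n+1)`, which cancels in the product, so the products of total signs faithfully
express the stated identity.) -/
theorem T_preserves_sign {n : ℕ} (p q : PairPerm n) (hp : InA p) (h : TStep p q) :
    (InB q → Equiv.Perm.sign p.1 * Equiv.Perm.sign p.2 =
      Equiv.Perm.sign q.1 * Equiv.Perm.sign q.2) ∧
    (InC q → Equiv.Perm.sign p.1 * Equiv.Perm.sign p.2 =
      -(Equiv.Perm.sign q.1 * Equiv.Perm.sign q.2)) := by
  obtain ⟨hp0, hpl⟩ := hp
  obtain ⟨r, hr1, hmid, hend, hq1off, hq2off, hq1on, hq1last, hq2on, hq20⟩ := h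
  obtain ⟨s, rfl⟩ : ∃ s, r = s + 1 := ⟨r - 1, (Nat.succ_pred_eq_of_pos hr1).symm⟩
  simp only [Nat.add_sub_cancel] at hend hq1last hq20
  have hstep : ∀ k, p.2 (chainM p (k + 1)) = chainW p k := fun k =>
    p.2.apply_symm_apply _
  have hlast_ne : (lastF n) ≠ (0 : Fin (n + 2)) := by
    simp [lastF, Fin.ext_iff]
  -- the chain avoids 0
  have hne0 : ∀ k, k < s + 1 → chainM p k ≠ 0 := by
    intro k hk
    cases k with
    | zero => exact hlast_ne
    | succ k =>
      intro hc
      have : chainW p k = 0 := by rw [← hstep k, hc, hp0]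
      exact (hmid k hk).1 this
  have hnel : ∀ k, 0 < k → k < s + 1 → chainM p k ≠ lastF n := by
    intro k hk0 hk hc
    cases k with
    | zero => omega
    | succ k =>
      have : chainW p k = lastF n := by rw [← hstep k, hc, hpl]
      exact (hmid k hk).2 this
  -- the chain is injective on [0, s]
  have hinj : ∀ j k, j < s + 1 → k < s + 1 → chainM p j = chainM p k → j = k := by
    intro j
    induction j with
    | zero =>
      intro k _ hk hjk
      cases k with
      | zero => rfl
      | succ k => exact absurd hjk.symm (hnel (k + 1) k.succ_pos hk)
    | succ j ih =>
      intro k hj hk hjk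
      cases k with
      | zero => exact absurd hjk (hnel (j + 1) j.succ_pos hj)
      | succ k =>
        have hw : chainW p j = chainW p k := by
          rw [← hstep j, ← hstep k, hjk]
        have hm : chainM p j = chainM p k := p.1.injective hw
        have := ih k (by omega) (by omega) hm
        omega
  -- the list of chain elements
  set L : List (Fin (n + 2)) := (List.range (s + 1)).map (chainM p) with hLdef
  have hLlen : L.length = s + 1 := by simp [hLdef]
  have hLnd : L.Nodup := by
    refine List.Nodup.map_on ?_ List.nodup_range
    intro a ha b hb hab
    exact hinj a b (List.mem_range.mp ha) (List.mem_range.mp hb) hab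
  have hLmem : ∀ i : Fin (n + 2), i ∈ L ↔ ∃ k, k < s + 1 ∧ chainM p k = i := by
    intro i
    simp [hLdef, List.mem_map, List.mem_range]
  have hLget : ∀ k (hk : k < s + 1), L[k]'(by omega) = chainM p k := by
    intro k hk
    simp [hLdef]
  set γ : Equiv.Perm (Fin (n + 2)) := L.formPerm with hγdef
  have hγ : ∀ k, k < s + 1 → γ (chainM p k) = chainM p ((k + 1) % (s + 1)) := by
    intro k hk
    have h1 : k < L.length := by omega
    have e := List.formPerm_apply_getElem L hLnd k h1
    rw [hLget k hk] at e
    rw [e]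
    simp [hLdef]
  have hγfix : ∀ i : Fin (n + 2), (∀ k, k < s + 1 → chainM p k ≠ i) → γ i = i := by
    intro i hi
    refine List.formPerm_apply_of_notMem ?_
    rw [hLmem]
    rintro ⟨k, hk, hik⟩
    exact hi k hk hik
  -- q.1 = p.1 * γ⁻¹
  have hq1eq : q.1 = p.1 * γ⁻¹ := by
    apply Equiv.ext
    intro i
    rw [Equiv.Perm.mul_apply]
    by_cases hi : ∃ k, k < s + 1 ∧ chainM p k = i
    · obtain ⟨k, hk, rfl⟩ := hi
      cases k with
      | zero =>
        have h1 : γ (chainM p s) = chainM p 0 := by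
          rw [hγ s (by omega), Nat.mod_self]
        have h2 : γ⁻¹ (chainM p 0) = chainM p s := by
          rw [← h1, ← Equiv.Perm.mul_apply, inv_mul_cancel, Equiv.Perm.one_apply]
        rw [h2]
        exact hq1last
      | succ k =>
        have h1 : γ (chainM p k) = chainM p (k + 1) := by
          rw [hγ k (by omega), Nat.mod_eq_of_lt (by omega)]
        have h2 : γ⁻¹ (chainM p (k + 1)) = chainM p k := by
          rw [← h1, ← Equiv.Perm.mul_apply, inv_mul_cancel, Equiv.Perm.one_apply]
        rw [h2]
        exact hq1on k hk
    · push_neg at hi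
      have h1 : γ⁻¹ i = i := γ.injective (by rw [← Equiv.Perm.mul_apply, mul_inv_cancel, Equiv.Perm.one_apply, hγfix i hi])
      rw [h1]
      exact hq1off i fun k hk hik => hi k hk hik.symm
  have hsγ : Equiv.Perm.sign γ = (-1) ^ s := by
    have := sign_formPerm_nodup L hLnd (by
      intro hnil
      rw [hnil] at hLlen
      simp at hLlen)
    rwa [hLlen, Nat.add_sub_cancel] at this
  have hq1sign : Equiv.Perm.sign q.1 = Equiv.Perm.sign p.1 * (-1) ^ s := by
    rw [hq1eq, map_mul, map_inv, hsγ]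
    simp
  constructor
  · -- case B
    rintro ⟨hB1, -⟩
    have hwB : chainW p s = lastF n := by rw [← hq1last, hB1]
    have hq2eq : q.2 = p.2 * γ := by
      apply Equiv.ext
      intro i
      rw [Equiv.Perm.mul_apply]
      by_cases hi : ∃ k, k < s + 1 ∧ chainM p k = i
      · obtain ⟨k, hk, rfl⟩ := hi
        rcases Nat.lt_or_ge k s with hks | hks
        · have h1 : γ (chainM p k) = chainM p (k + 1) := by
            rw [hγ k hk, Nat.mod_eq_of_lt (by omega)]
          rw [h1, hstep k]
          exact hq2on k hk
        · have hks' : k = s := by omega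
          subst hks'
          have h1 : γ (chainM p k) = chainM p 0 := by
            rw [hγ k hk, Nat.mod_self]
          rw [h1]
          show q.2 (chainM p k) = p.2 (lastF n)
          rw [hpl, hq2on k hk, hwB]
      · push_neg at hi
        rw [hγfix i hi]
        by_cases hi0 : i = 0
        · subst hi0
          rw [hp0, hq20, if_neg (by rw [hwB]; exact hlast_ne)]
        · exact hq2off i hi0 fun k hk hik => hi k hk hik.symm
    have hq2sign : Equiv.Perm.sign q.2 = Equiv.Perm.sign p.2 * (-1) ^ s := by
      rw [hq2eq, map_mul, hsγ]
    rw [hq1sign, hq2sign, mul_mul_mul_comm, Int.units_mul_self, mul_one]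
  · -- case C
    rintro ⟨hC1, -⟩
    have hwC : chainW p s = 0 := by rw [← hq1last, hC1]
    set L' : List (Fin (n + 2)) := 0 :: L with hL'def
    have hL'len : L'.length = s + 2 := by simp [hL'def, hLlen]
    have hL'nd : L'.Nodup := by
      rw [hL'def, List.nodup_cons]
      refine ⟨?_, hLnd⟩
      rw [hLmem]
      rintro ⟨k, hk, hk0⟩
      exact hne0 k hk hk0
    set δ : Equiv.Perm (Fin (n + 2)) := L'.formPerm with hδdef
    have hL'get : ∀ k (hk : k < s + 1), L'[k + 1]'(by rw [hL'len]; omega) = chainM p k := by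
      intro k hk
      show L[k]'(by omega) = chainM p k
      exact hLget k hk
    have hδ0 : δ 0 = chainM p 0 := by
      have e := List.formPerm_apply_getElem L' hL'nd 0 (by rw [hL'len]; omega)
      have h0 : L'[0]'(by rw [hL'len]; omega) = (0 : Fin (n + 2)) := by simp [hL'def]
      rw [h0] at e
      rw [hδdef, e]
      simp [hL'def, hLdef, Nat.mod_eq_of_lt]
    have hδ : ∀ k, k < s + 1 → δ (chainM p k) =
        (if k < s then chainM p (k + 1) else 0) := by
      intro k hk
      have e := List.formPerm_apply_getElem L' hL'nd (k + 1) (by rw [hL'len]; omega)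
      rw [hL'get k hk] at e
      rw [hδdef, e]
      rcases Nat.lt_or_ge k s with hks | hks
      · rw [if_pos hks]
        have h1 : (k + 1 + 1) % L'.length = (k + 1) + 1 := by
          rw [hL'len]; exact Nat.mod_eq_of_lt (by omega)
        simp only [h1]
        exact hL'get (k + 1) (by omega)
      · have hks' : k = s := by omega
        rw [if_neg (show ¬ k < s by omega)]
        have h1 : (k + 1 + 1) % L'.length = 0 := by
          rw [hL'len]
          have h3 : k + 1 + 1 = s + 2 := by omega
          rw [h3, Nat.mod_self]
        simp only [h1]
        simp [hL'def]
    have hδfix : ∀ i : Fin (n + 2), i ≠ 0 → (∀ k, k < s + 1 → chainM p k ≠ i) →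
        δ i = i := by
      intro i hi0 hi
      refine List.formPerm_apply_of_notMem ?_
      rw [hL'def, List.mem_cons]
      rintro (h | h)
      · exact hi0 h
      · rw [hLmem] at h
        obtain ⟨k, hk, hik⟩ := h
        exact hi k hk hik
    have hq2eq : q.2 = p.2 * δ := by
      apply Equiv.ext
      intro i
      rw [Equiv.Perm.mul_apply]
      by_cases hi : ∃ k, k < s + 1 ∧ chainM p k = i
      · obtain ⟨k, hk, rfl⟩ := hi
        rw [hδ k hk]
        rcases Nat.lt_or_ge k s with hks | hks
        · rw [if_pos hks, hstep k]
          exact hq2on k hk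
        · have hks' : k = s := by omega
          subst hks'
          rw [if_neg (show ¬ k < k by omega), hp0, hq2on k hk, hwC]
      · push_neg at hi
        by_cases hi0 : i = 0
        · subst hi0
          rw [hδ0]
          show q.2 0 = p.2 (lastF n)
          rw [hpl, hq20, if_pos hwC]
        · rw [hδfix i hi0 hi]
          exact hq2off i hi0 fun k hk hik => hi k hk hik.symm
    have hsδ : Equiv.Perm.sign δ = (-1) ^ (s + 1) := by
      have := sign_formPerm_nodup L' hL'nd (by simp [hL'def])
      rwa [hL'len, show s + 2 - 1 = s + 1 from rfl] at this
    have hq2sign : Equiv.Perm.sign q.2 = Equiv.Perm.sign p.2 * (-1) ^ (s + 1) := by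
      rw [hq2eq, map_mul, hsδ]
    have hx : ((-1 : ℤˣ)) ^ s * (-1) ^ (s + 1) = -1 := by
      rw [pow_succ, ← mul_assoc, Int.units_mul_self, one_mul]
    rw [hq1sign, hq2sign, mul_mul_mul_comm, hx, mul_neg_one, neg_neg]
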